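/- If no error occurs, decoding returns the trivial syndrome and the original data: for every c = (c(0), c(1)) ∈ ℂ² there is a nonzero complex scalar α independent of c such that T(f(c)) = α · |0000⟩ ⊗ (c(0)|0⟩ + c(1)|1⟩). -/

import Mathlib

open scoped BigOperators

noncomputable section

/-- The 5-qubit state space `V₅ = (Fin 5 → Fin 2) → ℂ ≅ ℂ^32` with the standard
Hermitian inner product. -/
abbrev V5 : Type := EuclideanSpace ℂ (Fin 5 → Fin 2)

/-- The phase exponent `γ(x,y) = x(y₀+y₁+y₂) + y₀y₁ + y₀y₃ + y₁y₄ + y₂y₃ + y₂y₄ + y₃y₄`,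
read modulo 2 via `(-1)^·`. -/
def gam (x : Fin 2) (y : Fin 5 → Fin 2) : ℕ :=
  x.val * ((y 0).val + (y 1).val + (y 2).val)
    + (y 0).val * (y 1).val + (y 0).val * (y 3).val + (y 1).val * (y 4).val
    + (y 2).val * (y 3).val + (y 2).val * (y 4).val + (y 3).val * (y 4).val

/-- The graph-code encoding `f : ℂ² → V₅`, `f(c)(y) = Σ_x (−1)^{γ(x,y)} c(x)`
(normalization factors omitted). -/
def enc (c : Fin 2 → ℂ) : V5 := WithLp.toLp 2 fun y => ∑ x : Fin 2, (-1 : ℂ) ^ gam x y * c x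

/-- The decoding phase exponent `θ`, with `z = (l₀, l₁, l₃, l₄, x̂)`. -/
def theta (y z : Fin 5 → Fin 2) : ℕ :=
  (z 4).val * ((y 0).val + (y 1).val + (y 2).val)
    + (y 0).val * (y 1).val + (y 0).val * (y 3).val + (y 1).val * (y 4).val
    + (y 2).val * (y 3).val + (y 2).val * (y 4).val + (y 3).val * (y 4).val
    + (y 0).val * (z 0).val + (y 1).val * (z 1).val + (y 3).val * (z 2).val
    + (y 4).val * (z 3).val

/-- The graph decoding operator `T : V₅ → V₅`,
`T|y⟩ = Σ_{l₀l₁l₃l₄, x̂} (−1)^θ |l₀l₁l₃l₄x̂⟩`. -/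
def dec (ψ : V5) : V5 := WithLp.toLp 2 fun z => ∑ y : Fin 5 → Fin 2, (-1 : ℂ) ^ theta y z * ψ y

/-- The product state `|s₀s₁s₂s₃⟩ ⊗ (a|0⟩ + b|1⟩)` in `V₅`: four syndrome qubits
followed by one data qubit. -/
def synData (s : Fin 4 → Fin 2) (a b : ℂ) : V5 :=
  WithLp.toLp 2 fun y => (if y 0 = s 0 ∧ y 1 = s 1 ∧ y 2 = s 2 ∧ y 3 = s 3 then (1 : ℂ) else 0)
    * (if y 4 = 0 then a else b)

lemma K0 : ∀ z : Fin 5 → Fin 2,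
    (∑ y : Fin 5 → Fin 2, (-1 : ℤ) ^ (theta y z + gam 0 y))
      = if z 0 = 0 ∧ z 1 = 0 ∧ z 2 = 0 ∧ z 3 = 0 ∧ z 4 = 0 then 32 else 0 := by
  decide

lemma K1 : ∀ z : Fin 5 → Fin 2,
    (∑ y : Fin 5 → Fin 2, (-1 : ℤ) ^ (theta y z + gam 1 y))
      = if z 0 = 0 ∧ z 1 = 0 ∧ z 2 = 0 ∧ z 3 = 0 ∧ z 4 = 1 then 32 else 0 := by
  decide

/-- No error: decoding returns the trivial syndrome `0000` and the original data,
up to a nonzero scalar independent of `c`. -/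
theorem decode_no_error :
    ∃ α : ℂ, α ≠ 0 ∧ ∀ c : Fin 2 → ℂ,
      dec (enc c) = α • synData ![0, 0, 0, 0] (c 0) (c 1) := by
  refine ⟨32, by norm_num, ?_⟩
  intro c
  ext z
  have hL : dec (enc c) z
      = (∑ y : Fin 5 → Fin 2, (-1 : ℂ) ^ (theta y z + gam 0 y)) * c 0
        + (∑ y : Fin 5 → Fin 2, (-1 : ℂ) ^ (theta y z + gam 1 y)) * c 1 := by
    simp only [dec, enc, PiLp.toLp_apply, Fin.sum_univ_two, mul_add, pow_add, Finset.sum_add_distrib,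
      ← mul_assoc, ← Finset.sum_mul]
  have hc0 : (∑ y : Fin 5 → Fin 2, (-1 : ℂ) ^ (theta y z + gam 0 y))
      = ((∑ y : Fin 5 → Fin 2, (-1 : ℤ) ^ (theta y z + gam 0 y) : ℤ) : ℂ) := by
    push_cast; rfl
  have hc1 : (∑ y : Fin 5 → Fin 2, (-1 : ℂ) ^ (theta y z + gam 1 y))
      = ((∑ y : Fin 5 → Fin 2, (-1 : ℤ) ^ (theta y z + gam 1 y) : ℤ) : ℂ) := by
    push_cast; rfl
  have e0 : (![0, 0, 0, 0] : Fin 4 → Fin 2) 0 = 0 := rfl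
  have e1 : (![0, 0, 0, 0] : Fin 4 → Fin 2) 1 = 0 := rfl
  have e2 : (![0, 0, 0, 0] : Fin 4 → Fin 2) 2 = 0 := rfl
  have e3 : (![0, 0, 0, 0] : Fin 4 → Fin 2) 3 = 0 := rfl
  show dec (enc c) z = (32 : ℂ) • synData ![0, 0, 0, 0] (c 0) (c 1) z
  rw [hL, hc0, hc1, K0 z, K1 z]
  simp only [synData, PiLp.toLp_apply, e0, e1, e2, e3, smul_eq_mul]
  have h4 : z 4 = 0 ∨ z 4 = 1 := by omega
  have h01 : (0 : Fin 2) ≠ 1 := by decide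
  rcases h4 with h4 | h4 <;>
    simp only [h4, and_true, and_false, if_true, if_false, h01, h01.symm, if_neg,
      eq_self_iff_true] <;>
    split_ifs with h <;> first | tauto | (push_cast; ring)
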